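/- The Dedekind sum function s(p,q), defined for coprime integers p, q and normalized by s(1,1) = 0 (or an equivalent normalization), satisfying s(p+nq, q) = s(p,q), s(-p,q) = -s(p,q), and the reciprocity law s(p,q) + s(q,p) = (p² + q² + 1 - 3pq)/(12pq), is uniquely determined by these properties. -/

import Mathlib

/-- The Dedekind sum function `s(p,q)`, defined for coprime integers `p, q` with `q > 0`,
normalized by `s(1,1) = 0`, and satisfying periodicity `s(p+nq,q) = s(p,q)`, oddness
`s(-p,q) = -s(p,q)`, and the reciprocity law
`s(p,q) + s(q,p) = (q² + p² + 1 - 3pq)/(12pq)`, is uniquely determined by these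
properties: any two such functions agree on coprime pairs. -/
theorem dedekind_sum_unique (s₁ s₂ : ℤ → ℤ → ℚ)
    (h₁per : ∀ p q n : ℤ, IsCoprime p q → 0 < q → s₁ (p + n * q) q = s₁ p q)
    (h₁odd : ∀ p q : ℤ, IsCoprime p q → 0 < q → s₁ (-p) q = - s₁ p q)
    (h₁rec : ∀ p q : ℤ, IsCoprime p q → 0 < p → 0 < q →
        s₁ p q + s₁ q p = ((q ^ 2 + p ^ 2 + 1 - 3 * p * q : ℤ) : ℚ) / ((12 * p * q : ℤ) : ℚ))
    (h₁norm : s₁ 1 1 = 0)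
    (h₂per : ∀ p q n : ℤ, IsCoprime p q → 0 < q → s₂ (p + n * q) q = s₂ p q)
    (h₂odd : ∀ p q : ℤ, IsCoprime p q → 0 < q → s₂ (-p) q = - s₂ p q)
    (h₂rec : ∀ p q : ℤ, IsCoprime p q → 0 < p → 0 < q →
        s₂ p q + s₂ q p = ((q ^ 2 + p ^ 2 + 1 - 3 * p * q : ℤ) : ℚ) / ((12 * p * q : ℤ) : ℚ))
    (h₂norm : s₂ 1 1 = 0) :
    ∀ p q : ℤ, IsCoprime p q → 0 < q → s₁ p q = s₂ p q := by
  suffices H : ∀ n : ℕ, ∀ p : ℤ, 0 < (n : ℤ) → IsCoprime p (n : ℤ) → s₁ p n = s₂ p n by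
    intro p q hco hq
    have hq' : q = ((q.toNat : ℕ) : ℤ) := by omega
    rw [hq'] at hco ⊢
    exact H q.toNat p (by omega) hco
  intro n
  induction n using Nat.strong_induction_on with
  | _ n ih =>
    intro p hn hco
    rcases Nat.lt_or_ge n 2 with h1 | h2
    · -- n = 1
      have hn1 : (n : ℤ) = 1 := by omega
      rw [hn1] at hco ⊢
      have e1 := h₁per p 1 (1 - p) hco one_pos
      have e2 := h₂per p 1 (1 - p) hco one_pos
      rw [show p + (1 - p) * 1 = 1 by ring] at e1 e2
      rw [← e1, ← e2, h₁norm, h₂norm]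
    · -- n ≥ 2
      set r : ℤ := p % (n : ℤ) with hr
      have hr0 : 0 ≤ r := Int.emod_nonneg p (by omega)
      have hrlt : r < (n : ℤ) := Int.emod_lt_of_pos p hn
      have hrne : r ≠ 0 := by
        intro h0
        have hdvd : (n : ℤ) ∣ p := Int.dvd_of_emod_eq_zero h0
        have hu : IsUnit ((n : ℤ)) := hco.isUnit_of_dvd' hdvd dvd_rfl
        rw [Int.isUnit_iff] at hu
        omega
      have hrpos : 0 < r := lt_of_le_of_ne hr0 (Ne.symm hrne)
      -- coprimality of r and n
      have hcor : IsCoprime r ((n : ℤ)) := by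
        have := hco.add_mul_left_left (-(p / (n : ℤ)))
        rwa [show p + (n : ℤ) * -(p / (n : ℤ)) = p % (n : ℤ) by
          rw [Int.emod_def]; ring] at this
      -- induction hypothesis at r
      have hrnat : ((r.toNat : ℕ) : ℤ) = r := by omega
      have hIH : s₁ (n : ℤ) r = s₂ (n : ℤ) r := by
        have := ih r.toNat (by omega) (n : ℤ) (by omega) (by rw [hrnat]; exact hcor.symm)
        rwa [hrnat] at this
      -- reciprocity
      have e1 := h₁rec r (n : ℤ) hcor hrpos hn
      have e2 := h₂rec r (n : ℤ) hcor hrpos hn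
      have key : s₁ r (n : ℤ) = s₂ r (n : ℤ) := by
        rw [hIH] at e1; linarith
      -- periodicity
      have p1 := h₁per r (n : ℤ) (p / (n : ℤ)) hcor hn
      have p2 := h₂per r (n : ℤ) (p / (n : ℤ)) hcor hn
      rw [show r + p / (n : ℤ) * (n : ℤ) = p from Int.emod_add_ediv_mul p (n : ℤ)] at p1 p2
      rw [p1, p2, key]
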